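/- Let X be a compact metric space and f : X → X a continuous map. If R ⊆ X is a repeller for f and R' ⊆ R is a repeller for the restricted system f|_R : R → R (with the subspace topology on the compact set R), then R' is a repeller for f on X. -/

import Mathlib

open Set

/-- The maximal invariant set in `U`: the union of all subsets `S ⊆ U` with `f '' S = S`. -/
def MaxInv {Y : Type*} (f : Y → Y) (U : Set Y) : Set Y :=
  ⋃₀ {S : Set Y | S ⊆ U ∧ f '' S = S}

/-- The maximal forward invariant set in `U`: the union of all subsets `S ⊆ U`
with `f '' S ⊆ S`. -/
def MaxInvPlus {Y : Type*} (f : Y → Y) (U : Set Y) : Set Y :=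
  ⋃₀ {S : Set Y | S ⊆ U ∧ f '' S ⊆ S}

/-- The omega-limit set `ω(U) = ⋂_{n ≥ 0} cl (⋃_{m ≥ n} f^[m] '' U)`. -/
def OmegaLim {Y : Type*} [TopologicalSpace Y] (f : Y → Y) (U : Set Y) : Set Y :=
  ⋂ n : ℕ, closure (⋃ m ≥ n, f^[m] '' U)

/-- The alpha-limit set `α(U) = ⋂_{n ≥ 0} cl (⋃_{m ≥ n} (f^[m]) ⁻¹' U)`. -/
def AlphaLim {Y : Type*} [TopologicalSpace Y] (f : Y → Y) (U : Set Y) : Set Y :=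
  ⋂ n : ℕ, closure (⋃ m ≥ n, f^[m] ⁻¹' U)

/-- A trapping region: a forward invariant set `U` with `f^[n] '' cl U ⊆ int U`
for some `n ≥ 1`. -/
def IsTrappingRegion {Y : Type*} [TopologicalSpace Y] (f : Y → Y) (U : Set Y) : Prop :=
  f '' U ⊆ U ∧ ∃ n : ℕ, 1 ≤ n ∧ f^[n] '' closure U ⊆ interior U

/-- An attractor: `A = Inv(U)` for some trapping region `U`. -/
def IsAttractor {Y : Type*} [TopologicalSpace Y] (f : Y → Y) (A : Set Y) : Prop :=
  ∃ U : Set Y, IsTrappingRegion f U ∧ A = MaxInv f U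

/-- An attracting neighborhood: `ω(U) ⊆ int U`. -/
def IsAttractingNbhd {Y : Type*} [TopologicalSpace Y] (f : Y → Y) (U : Set Y) : Prop :=
  OmegaLim f U ⊆ interior U

/-- A repelling region: a backward invariant set `U` with `(f^[n]) ⁻¹' cl U ⊆ int U`
for some `n ≥ 1`. -/
def IsRepellingRegion {Y : Type*} [TopologicalSpace Y] (f : Y → Y) (U : Set Y) : Prop :=
  f ⁻¹' U ⊆ U ∧ ∃ n : ℕ, 1 ≤ n ∧ f^[n] ⁻¹' closure U ⊆ interior U

/-- A repeller: `R = Inv⁺(U)` for some repelling region `U`. -/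
def IsRepeller {Y : Type*} [TopologicalSpace Y] (f : Y → Y) (R : Set Y) : Prop :=
  ∃ U : Set Y, IsRepellingRegion f U ∧ R = MaxInvPlus f U

/-- A repelling neighborhood: `α(U) ⊆ int U`. -/
def IsRepellingNbhd {Y : Type*} [TopologicalSpace Y] (f : Y → Y) (U : Set Y) : Prop :=
  AlphaLim f U ⊆ interior U

/-- A backward orbit: a sequence `γ : ℕ → Y` with `f (γ (k+1)) = γ k` for all `k`.
A backward orbit through `x` additionally satisfies `γ 0 = x`. -/
def IsBackwardOrbit {Y : Type*} (f : Y → Y) (γ : ℕ → Y) : Prop :=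
  ∀ k : ℕ, f (γ (k + 1)) = γ k

/-- The orbital alpha-limit set `α_o(γ) = ⋂_{n ≥ 0} cl {γ m : m ≥ n}`. -/
def OrbAlpha {Y : Type*} [TopologicalSpace Y] (γ : ℕ → Y) : Set Y :=
  ⋂ n : ℕ, closure (γ '' {m : ℕ | n ≤ m})

/-- The dual repeller of an attractor `A`: `A* = {x : ω(x) ∩ A = ∅}`. -/
def DualRepeller {Y : Type*} [TopologicalSpace Y] (f : Y → Y) (A : Set Y) : Set Y :=
  {x : Y | OmegaLim f {x} ∩ A = ∅}

/-- The dual attractor of a repeller `R`: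
`R* = {x : ∃ backward orbit γ through x with α_o(γ) ∩ R = ∅}`. -/
def DualAttractor {Y : Type*} [TopologicalSpace Y] (f : Y → Y) (R : Set Y) : Set Y :=
  {x : Y | ∃ γ : ℕ → Y, γ 0 = x ∧ IsBackwardOrbit f γ ∧ OrbAlpha γ ∩ R = ∅}
namespace RepellerAux4
lemma maxInvPlus_eq_orbit {Y : Type*} (f : Y → Y) (W : Set Y) :
    MaxInvPlus f W = {x | ∀ n, f^[n] x ∈ W} := by
  apply subset_antisymm
  · rintro x ⟨S, ⟨hSW, hSf⟩, hxS⟩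
    intro n
    have h : f^[n] x ∈ S := by
      induction n with
      | zero => simpa using hxS
      | succ n ih =>
        rw [Function.iterate_succ_apply']
        exact hSf ⟨_, ih, rfl⟩
    exact hSW h
  · intro x hx
    exact ⟨{x | ∀ n, f^[n] x ∈ W}, ⟨fun y hy => by simpa using hy 0,
      by rintro _ ⟨y, hy, rfl⟩ n; rw [← Function.iterate_succ_apply]; exact hy (n + 1)⟩, hx⟩

lemma back_chain {Y : Type*} {f : Y → Y} {N : Set Y} (h : ∀ x, f x ∈ N → x ∈ N)
    {s t : ℕ} (hst : s ≤ t) {x : Y} (hx : f^[t] x ∈ N) : f^[s] x ∈ N := by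
  obtain ⟨k, rfl⟩ := Nat.exists_eq_add_of_le hst
  clear hst
  induction k with
  | zero => simpa using hx
  | succ k ih =>
    apply ih
    apply h
    rw [← Function.iterate_succ_apply' f (s + k) x]
    exact hx

lemma nice_of_repelling {Y : Type*} [TopologicalSpace Y] {f : Y → Y} (hf : Continuous f)
    {U : Set Y} (hU : f ⁻¹' U ⊆ U ∧ ∃ n : ℕ, 1 ≤ n ∧ f^[n] ⁻¹' closure U ⊆ interior U) :
    ∃ (N : Set Y) (p : ℕ), IsClosed N ∧ 1 ≤ p ∧ (∀ x, f x ∈ N → x ∈ N) ∧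
      (∀ x, f^[p] x ∈ N → x ∈ interior N) ∧
      (∀ x : Y, (∀ n, f^[n] x ∈ N) ↔ (∀ n, f^[n] x ∈ U)) := by
  obtain ⟨-, p, hp1, hUp⟩ := hU
  obtain ⟨q, rfl⟩ : ∃ q, p = q + 1 := ⟨p - 1, (Nat.succ_pred_eq_of_pos hp1).symm⟩
  set p := q + 1
  refine ⟨⋂ j < p, f^[j] ⁻¹' closure U, p, ?_, hp1, ?_, ?_, ?_⟩
  · exact isClosed_biInter fun j _ => (isClosed_closure).preimage (hf.iterate j)
  · intro x hx
    simp only [mem_iInter, mem_preimage] at hx ⊢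
    intro j hj
    match j with
    | 0 =>
      have hq : f^[p] x ∈ closure U := by
        rw [Function.iterate_succ_apply]
        exact hx q (Nat.lt_succ_self q)
      have := hUp (by simpa using hq)
      simpa using subset_closure (interior_subset this)
    | Nat.succ i =>
      rw [Function.iterate_succ_apply]
      exact hx i (Nat.lt_of_succ_lt hj)
  · intro x hx
    simp only [mem_iInter, mem_preimage] at hx
    have hOsub : (⋂ j < p, f^[j] ⁻¹' interior U) ⊆ ⋂ j < p, f^[j] ⁻¹' closure U := by
      refine iInter₂_mono fun j _ => preimage_mono ?_
      exact interior_subset.trans subset_closure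
    have hOopen : IsOpen (⋂ j < p, f^[j] ⁻¹' interior U) := by
      refine (Set.finite_Iio p).isOpen_biInter fun j _ => ?_
      exact isOpen_interior.preimage (hf.iterate j)
    refine interior_maximal hOsub hOopen ?_
    simp only [mem_iInter, mem_preimage]
    intro j hj
    apply hUp
    simp only [mem_preimage]
    rw [← Function.iterate_add_apply]
    have : f^[j] (f^[p] x) ∈ closure U := hx j hj
    rw [← Function.iterate_add_apply] at this
    have hcomm : p + j = j + p := Nat.add_comm _ _
    rw [hcomm]
    exact this
  · intro x
    constructor
    · intro h n
      have h1 : ∀ k, f^[k] x ∈ closure U := by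
        intro k
        have := h k
        simp only [mem_iInter, mem_preimage] at this
        simpa using this 0 (Nat.succ_pos q)
      have : f^[p] (f^[n] x) ∈ closure U := by
        rw [← Function.iterate_add_apply]; exact h1 (p + n)
      exact interior_subset (hUp (by simpa using this))
    · intro h n
      simp only [mem_iInter, mem_preimage]
      intro j hj
      rw [← Function.iterate_add_apply]
      exact subset_closure (h (j + n))

lemma nested_subset_open {Y : Type*} [TopologicalSpace Y] {K : ℕ → Set Y}
    (hd : ∀ n, K (n + 1) ⊆ K n) (hc : ∀ n, IsCompact (K n)) (hcl : ∀ n, IsClosed (K n))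
    {O : Set Y} (hO : IsOpen O) (h : (⋂ n, K n) ⊆ O) : ∃ n, K n ⊆ O := by
  by_contra hcon
  push_neg at hcon
  have hanti : ∀ {a b : ℕ}, a ≤ b → K b ⊆ K a := by
    intro a b hab
    obtain ⟨k, rfl⟩ := Nat.exists_eq_add_of_le hab
    induction k with
    | zero => simp
    | succ k ih => exact (hd (a + k)).trans (ih (Nat.le_add_right a k))
  have hne : ∀ n, (K n ∩ Oᶜ).Nonempty := by
    intro n
    obtain ⟨x, hx1, hx2⟩ := not_subset.mp (hcon n)
    exact ⟨x, hx1, hx2⟩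
  have hdir : Directed (· ⊇ ·) (fun n => K n ∩ Oᶜ) := by
    intro a b
    exact ⟨max a b, inter_subset_inter_left _ (hanti (le_max_left a b)),
      inter_subset_inter_left _ (hanti (le_max_right a b))⟩
  have := IsCompact.nonempty_iInter_of_directed_nonempty_isCompact_isClosed _ hdir hne
    (fun n => (hc n).inter_right (isClosed_compl_iff.mpr hO))
    (fun n => (hcl n).inter (isClosed_compl_iff.mpr hO))
  obtain ⟨x, hx⟩ := this
  simp only [mem_iInter, mem_inter_iff] at hx
  exact (hx 0).2 (h (mem_iInter.mpr fun n => (hx n).1))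

lemma restrict_iterate_val {X : Type*} {f : X → X} {R : Set X} (hmaps : Set.MapsTo f R R) :
    ∀ (n : ℕ) (ξ : R), ((Set.MapsTo.restrict f R R hmaps)^[n] ξ : X) = f^[n] (ξ : X) := by
  intro n
  induction n with
  | zero => intro ξ; simp
  | succ n ih =>
    intro ξ
    rw [Function.iterate_succ_apply', Function.iterate_succ_apply']
    rw [Set.MapsTo.val_restrict_apply, ih]
end RepellerAux4

open RepellerAux4 Filter Topology

/-- A repeller of the system restricted to a repeller is a
repeller of the full system. -/
theorem repeller_of_restriction_is_repeller
    {X : Type*} [MetricSpace X] [CompactSpace X]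
    (f : X → X) (hf : Continuous f) (R R' : Set X)
    (hR : IsRepeller f R) (hmaps : Set.MapsTo f R R) (hsub : R' ⊆ R)
    (hR' : IsRepeller (Set.MapsTo.restrict f R R hmaps)
      ((Subtype.val : R → X) ⁻¹' R')) :
    IsRepeller f R' := by
  classical
  obtain ⟨U, hUrr, hRU⟩ := hR
  obtain ⟨N, p, hNcl, hp1, hNb, hNp, hNchar⟩ := nice_of_repelling hf hUrr
  -- characterization of R
  have hRchar : ∀ x, x ∈ R ↔ ∀ n, f^[n] x ∈ N := by
    intro x
    rw [hRU, maxInvPlus_eq_orbit]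
    exact Iff.symm (hNchar x)
  have hRcl : IsClosed R := by
    have : R = ⋂ n, f^[n] ⁻¹' N := by
      ext x; simp only [mem_iInter, mem_preimage]; exact hRchar x
    rw [this]
    exact isClosed_iInter fun n => hNcl.preimage (hf.iterate n)
  have hRcp : IsCompact R := hRcl.isCompact
  haveI : CompactSpace R := isCompact_iff_compactSpace.mp hRcp
  have hRsubN : R ⊆ N := fun x hx => by simpa using (hRchar x).mp hx 0
  -- R backward invariant
  have hRb : ∀ x, f x ∈ R → x ∈ R := by
    intro x hx
    rw [hRchar]
    intro n
    match n with
    | 0 =>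
      obtain ⟨q, hq⟩ : ∃ q, p = q + 1 := ⟨p - 1, (Nat.succ_pred_eq_of_pos hp1).symm⟩
      have : f^[p] x ∈ N := by
        rw [hq, Function.iterate_succ_apply]
        exact (hRchar (f x)).mp hx q
      simpa using interior_subset (hNp x this)
    | Nat.succ n =>
      rw [Function.iterate_succ_apply]
      exact (hRchar (f x)).mp hx n
  -- R forward invariant under iterates
  have hRit : ∀ (n : ℕ) (x), x ∈ R → f^[n] x ∈ R := by
    intro n x hx
    rw [hRchar]
    intro j
    rw [← Function.iterate_add_apply]
    exact (hRchar x).mp hx (j + n)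
  -- subsystem
  set g := Set.MapsTo.restrict f R R hmaps with hg
  have hgc : Continuous g := hf.restrict hmaps
  obtain ⟨Vs, hVrr, hVR'⟩ := hR'
  obtain ⟨V', m, hV'cl, hm1, hV'b, hV'p, hV'char⟩ := nice_of_repelling hgc hVrr
  have hval : ∀ (n : ℕ) (ξ : R), (g^[n] ξ : X) = f^[n] (ξ : X) := restrict_iterate_val hmaps
  -- ξ ∈ val⁻¹ R' iff orbit in V'
  have hR'sub : ∀ ξ : R, ((ξ : X) ∈ R' ↔ ∀ n, g^[n] ξ ∈ V') := by
    intro ξ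
    have h1 : ξ ∈ (Subtype.val ⁻¹' R' : Set R) ↔ ∀ n, g^[n] ξ ∈ Vs := by
      rw [hVR', maxInvPlus_eq_orbit]; rfl
    have := (hV'char ξ)
    constructor
    · intro h; exact this.mpr (h1.mp h)
    · intro h; exact h1.mpr (this.mp h)
  set V₀ : Set X := Subtype.val '' V' with hV₀def
  have hV₀R : V₀ ⊆ R := by rintro _ ⟨v, hv, rfl⟩; exact v.2
  have hV'cp : IsCompact V' := hV'cl.isCompact
  have hV₀cp : IsCompact V₀ := hV'cp.image continuous_subtype_val
  have hV₀cl : IsClosed V₀ := hV₀cp.isClosed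
  -- membership transfer
  have hmemV₀ : ∀ (ξ : R), (ξ : X) ∈ V₀ ↔ ξ ∈ V' := by
    intro ξ
    constructor
    · rintro ⟨v, hv, hvx⟩
      have : v = ξ := Subtype.ext hvx
      rwa [← this]
    · intro h; exact ⟨ξ, h, rfl⟩
  -- V₀ backward invariant in X
  have hV₀b : ∀ x, f x ∈ V₀ → x ∈ V₀ := by
    intro x hx
    have hxR : x ∈ R := hRb x (hV₀R hx)
    have hgx : g ⟨x, hxR⟩ ∈ V' := by
      rw [← hmemV₀]
      rw [Set.MapsTo.val_restrict_apply]
      exact hx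
    have := hV'b ⟨x, hxR⟩ hgx
    exact (hmemV₀ ⟨x, hxR⟩).mpr this
  -- characterization of R'
  have hR'char : ∀ x, x ∈ R' ↔ ∀ n, f^[n] x ∈ V₀ := by
    intro x
    constructor
    · intro hx n
      have hxR : x ∈ R := hsub hx
      have := (hR'sub ⟨x, hxR⟩).mp hx n
      rw [← hmemV₀, hval] at this
      exact this
    · intro h
      have hxR : x ∈ R := hV₀R (by simpa using h 0)
      apply (hR'sub ⟨x, hxR⟩).mpr
      intro n
      rw [← hmemV₀, hval]
      exact h n
  -- the open set O realizing interior V'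
  obtain ⟨O, hOo, hOpre⟩ := isOpen_induced_iff.mp (isOpen_interior (s := V'))
  have hOR : O ∩ R ⊆ V₀ := by
    rintro x ⟨hxO, hxR⟩
    have : (⟨x, hxR⟩ : R) ∈ interior V' := by rw [← hOpre]; exact hxO
    exact (hmemV₀ ⟨x, hxR⟩).mpr (interior_subset this)
  have hQO : ∀ x (hx : x ∈ R), f^[m] x ∈ V₀ → x ∈ O := by
    intro x hx hmx
    have hgm : g^[m] ⟨x, hx⟩ ∈ V' := by
      rw [← hmemV₀, hval]; exact hmx
    have := hV'p ⟨x, hx⟩ hgm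
    rw [← hOpre] at this
    exact this
  -- Q
  set Q : Set X := R ∩ f^[m] ⁻¹' V₀ with hQdef
  have hQcl : IsClosed Q := hRcl.inter (hV₀cl.preimage (hf.iterate m))
  have hQsubO : Q ⊆ O := fun x hx => hQO x hx.1 hx.2
  -- KK and separation
  set KK : Set X := closure (R \ V₀) with hKKdef
  have hKKcl : IsClosed KK := isClosed_closure
  have hKKQ : Disjoint KK Q := by
    rw [Set.disjoint_left]
    intro x hxK hxQ
    have hxO : x ∈ O := hQsubO hxQ
    rw [mem_closure_iff] at hxK
    obtain ⟨y, hy1, hy2⟩ := hxK O hOo hxO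
    exact hy2.2 (hOR ⟨hy1, hy2.1⟩)
  obtain ⟨G, G₂, hGo, hG₂o, hKKG, hQG₂, hGG₂⟩ := normal_separation hKKcl hQcl hKKQ
  have hclGQ : Disjoint (closure G) Q := by
    have : closure G ⊆ G₂ᶜ :=
      closure_minimal (fun x hx hx2 => (Set.disjoint_left.mp hGG₂) hx hx2)
        (isClosed_compl_iff.mpr hG₂o)
    rw [Set.disjoint_left]
    intro x hx hxQ
    exact this hx (hQG₂ hxQ)
  have hRG : ∀ x, x ∈ R → x ∉ G → x ∈ V₀ := by
    intro x hxR hxG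
    by_contra hv
    exact hxG (hKKG (subset_closure ⟨hxR, hv⟩))
  -- choice of T
  have hNchain : ∀ {s t : ℕ} {x : X}, s ≤ t → f^[t] x ∈ N → f^[s] x ∈ N :=
    fun {s t x} hst hx => back_chain hNb hst hx
  have hV₀chain : ∀ {s t : ℕ} {x : X}, s ≤ t → f^[t] x ∈ V₀ → f^[s] x ∈ V₀ :=
    fun {s t x} hst hx => back_chain hV₀b hst hx
  obtain ⟨T, hT⟩ : ∃ T, (f^[T] ⁻¹' N ∩ f^[m] ⁻¹' (V₀ ∪ Gᶜ)) ⊆ (closure G)ᶜ := by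
    apply nested_subset_open (O := (closure G)ᶜ)
    · intro n
      apply inter_subset_inter_left
      intro x hx
      exact hNchain (Nat.le_succ n) hx
    · intro n
      exact ((hNcl.preimage (hf.iterate n)).inter
        ((hV₀cl.union (isClosed_compl_iff.mpr hGo)).preimage (hf.iterate m))).isCompact
    · intro n
      exact (hNcl.preimage (hf.iterate n)).inter
        ((hV₀cl.union (isClosed_compl_iff.mpr hGo)).preimage (hf.iterate m))
    · exact isClosed_closure.isOpen_compl
    · intro x hx
      simp only [mem_iInter, mem_inter_iff, mem_preimage] at hx
      have hxR : x ∈ R := by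
        rw [hRchar]; exact fun n => (hx n).1
      have hmR : f^[m] x ∈ R := hRit m x hxR
      have hmV : f^[m] x ∈ V₀ := by
        rcases (hx 0).2 with h | h
        · exact h
        · exact hRG _ hmR h
      have hxQ : x ∈ Q := ⟨hxR, hmV⟩
      exact fun hc => (Set.disjoint_left.mp hclGQ) hc hxQ
  set C : Set X := f^[T] ⁻¹' N ∩ (V₀ ∪ Gᶜ) with hCdef
  have hCcl : IsClosed C := (hNcl.preimage (hf.iterate T)).inter
    (hV₀cl.union (isClosed_compl_iff.mpr hGo))
  have hΦ : ∀ y, f^[T] y ∈ N → f^[m] y ∈ V₀ ∪ Gᶜ → y ∉ closure G := by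
    intro y h1 h2
    exact hT ⟨h1, h2⟩
  have hR'C : ∀ x, x ∈ R' → x ∈ C := by
    intro x hx
    constructor
    · exact hRsubN (hRit T x (hsub hx))
    · exact Or.inl ((hR'char x).mp hx 0)
  -- C is contained in iterated preimages of N
  have hCN : ∀ {t : ℕ} {x : X}, f^[t] x ∈ C → ∀ {s : ℕ}, s ≤ T + t → f^[s] x ∈ N := by
    intro t x hx s hs
    apply hNchain hs
    rw [Function.iterate_add_apply]
    exact hx.1
  -- the interior approximation of C
  have hCint : ∀ z : X, f^[T + p] z ∈ N → z ∉ closure G → z ∈ interior C := by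
    intro z h1 h2
    have hopen : IsOpen (f^[T] ⁻¹' interior N ∩ (closure G)ᶜ) :=
      (isOpen_interior.preimage (hf.iterate T)).inter isClosed_closure.isOpen_compl
    have hsubC : (f^[T] ⁻¹' interior N ∩ (closure G)ᶜ) ⊆ C := by
      rintro y ⟨hy1, hy2⟩
      exact ⟨show f^[T] y ∈ N from interior_subset (show f^[T] y ∈ interior N from hy1),
        Or.inr (fun hyG => hy2 (subset_closure hyG))⟩
    apply interior_maximal hsubC hopen
    refine ⟨?_, h2⟩
    simp only [mem_preimage]
    apply hNp
    rw [← Function.iterate_add_apply]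
    rwa [Nat.add_comm p T]
  -- MAIN COMPACTNESS STEP
  have hIII : ∃ n₁, 1 ≤ n₁ ∧ closure (⋃ k, f^[n₁ + k] ⁻¹' C) ⊆ interior C := by
    by_contra hcon
    push_neg at hcon
    -- for each n, pick a bad point in the closure at level M n
    set M : ℕ → ℕ := fun n => n + T + p + 1 with hM
    have hbad : ∀ n : ℕ, ∃ z, z ∈ closure (⋃ k, f^[M n + k] ⁻¹' C) ∧ z ∉ interior C := by
      intro n
      obtain ⟨z, hz1, hz2⟩ := not_subset.mp (hcon (M n) (by simp only [hM]; omega))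
      exact ⟨z, hz1, hz2⟩
    choose z hz1 hz2 using hbad
    -- each z n is within the deep preimages of N
    have hSN : ∀ n : ℕ, closure (⋃ k, f^[M n + k] ⁻¹' C) ⊆ f^[M n] ⁻¹' N := by
      intro n
      apply closure_minimal _ (hNcl.preimage (hf.iterate (M n)))
      rintro y hy
      simp only [mem_iUnion, mem_preimage] at hy ⊢
      obtain ⟨k, hk⟩ := hy
      exact hCN hk (by simp only [hM]; omega)
    have hzN : ∀ n, f^[M n] (z n) ∈ N := fun n => hSN n (hz1 n)
    -- each z n lies in closure G
    have hzG : ∀ n, z n ∈ closure G := by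
      intro n
      by_contra hg
      apply hz2 n
      apply hCint
      · exact hNchain (by simp only [hM]; omega) (hzN n)
      · exact hg
    -- approximating points x n
    have hx : ∀ n : ℕ, ∃ x mn, dist (z n) x < 1 / (n + 1) ∧ M n ≤ mn ∧ f^[mn] x ∈ C := by
      intro n
      have := (hz1 n)
      rw [Metric.mem_closure_iff] at this
      obtain ⟨y, hy, hyd⟩ := this (1 / (n + 1)) (by positivity)
      simp only [mem_iUnion, mem_preimage] at hy
      obtain ⟨k, hk⟩ := hy
      exact ⟨y, M n + k, hyd, Nat.le_add_right _ _, hk⟩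
    choose x mn hdist hmn hxC using hx
    -- pigeonhole on residues mod m
    have hm0 : 0 < m := hm1
    have hfreq : ∃ r, r < m ∧ ∃ᶠ n in atTop, mn n % m = r := by
      by_contra hr
      push_neg at hr
      have hev : ∀ r ∈ Finset.range m, ∀ᶠ n in atTop, ¬(mn n % m = r) := by
        intro r hrr
        have := hr r (Finset.mem_range.mp hrr)
        exact this
      have := (Filter.eventually_all_finset (Finset.range m)).mpr hev
      obtain ⟨n, hn⟩ := this.exists
      exact hn (mn n % m) (Finset.mem_range.mpr (Nat.mod_lt _ hm0)) rfl
    obtain ⟨r, hrm, hfr⟩ := hfreq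
    obtain ⟨φ, hφmono, hφr⟩ := Filter.extraction_of_frequently_atTop hfr
    -- convergent subsequence within closure G
    have hclGcp : IsCompact (closure G) := isClosed_closure.isCompact
    obtain ⟨zl, hzlG, ψ, hψmono, hψtend⟩ :=
      hclGcp.tendsto_subseq (x := fun k => z (φ k)) (fun k => hzG (φ k))
    set ι : ℕ → ℕ := fun k => φ (ψ k) with hι
    have hιmono : StrictMono ι := hφmono.comp hψmono
    have hιge : ∀ k, k ≤ ι k := fun k => hιmono.le_apply
    have hztend : Tendsto (fun k => z (ι k)) atTop (𝓝 zl) := hψtend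
    -- x converges to the same limit
    have hxtend : Tendsto (fun k => x (ι k)) atTop (𝓝 zl) := by
      rw [tendsto_iff_dist_tendsto_zero]
      refine squeeze_zero (f := fun k : ℕ => dist (x (ι k)) zl)
        (g := fun k : ℕ => 1 / (k + 1 : ℝ) + dist (z (ι k)) zl) (fun k => dist_nonneg) ?_ ?_
      · intro k
        have htri : dist (x (ι k)) zl ≤ dist (x (ι k)) (z (ι k)) + dist (z (ι k)) zl :=
          dist_triangle _ _ _
        have h1 : dist (x (ι k)) (z (ι k)) < 1 / (ι k + 1 : ℝ) := by
          rw [dist_comm]; exact hdist (ι k)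
        have hle : (k : ℝ) ≤ (ι k : ℝ) := Nat.cast_le.mpr (hιge k)
        have h2 : (1 : ℝ) / (ι k + 1) ≤ 1 / (k + 1) :=
          one_div_le_one_div_of_le (by positivity) (by linarith)
        linarith
      · have l1 : Tendsto (fun k : ℕ => 1 / (k + 1 : ℝ)) atTop (𝓝 0) :=
          tendsto_one_div_add_atTop_nhds_zero_nat
        have l2 : Tendsto (fun k => dist (z (ι k)) zl) atTop (𝓝 0) :=
          tendsto_iff_dist_tendsto_zero.mp hztend
        simpa using l1.add l2
    -- the limit is in R
    have hzlR : zl ∈ R := by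
      rw [hRchar]
      intro j
      have hclosed : IsClosed (f^[j] ⁻¹' N) := hNcl.preimage (hf.iterate j)
      apply hclosed.mem_of_tendsto hztend
      filter_upwards [eventually_ge_atTop j] with k hk
      simp only [mem_preimage]
      exact hNchain (by simp only [hM]; have := hιge k; omega) (hzN (ι k))
    -- backward induction along the orbit of x n
    have hstep : ∀ (n a t : ℕ), t + (a + 1) * m = mn n → f^[t] (x n) ∉ closure G := by
      intro n a
      induction a with
      | zero =>
        intro t ht
        have htle : t ≤ mn n := Nat.le.intro ht
        apply hΦ
        · rw [← Function.iterate_add_apply]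
          exact hCN (hxC n) (by omega)
        · rw [← Function.iterate_add_apply]
          have hmt : m + t = mn n := by rw [← ht]; ring
          rw [hmt]
          exact (hxC n).2
      | succ a ih =>
        intro t ht
        have htle : t ≤ mn n := Nat.le.intro ht
        have ht' : (t + m) + (a + 1) * m = mn n := by
          rw [← ht]; ring
        have hprev := ih (t + m) ht'
        apply hΦ
        · rw [← Function.iterate_add_apply]
          exact hCN (hxC n) (by omega)
        · rw [← Function.iterate_add_apply]
          rw [Nat.add_comm m t]
          exact Or.inr (fun hG => hprev (subset_closure hG))
    -- limit membership in V₀ along the progression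
    have hlim : ∀ b : ℕ, f^[r + b * m] zl ∈ V₀ := by
      intro b
      have hGc : f^[r + b * m] zl ∈ Gᶜ := by
        have hclosed : IsClosed (Gᶜ) := isClosed_compl_iff.mpr hGo
        have htt : Tendsto (fun k => f^[r + b * m] (x (ι k))) atTop (𝓝 (f^[r + b * m] zl)) :=
          ((hf.iterate (r + b * m)).tendsto zl).comp hxtend
        apply hclosed.mem_of_tendsto htt
        filter_upwards [eventually_ge_atTop (r + (b + 2) * m)] with k hk
        have hmnk : r + (b + 2) * m ≤ mn (ι k) := by
          refine hk.trans ((hιge k).trans ?_)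
          refine (Nat.le_add_right (ι k) (T + p + 1)).trans ?_
          have h2 := hmn (ι k)
          simp only [hM] at h2
          omega
        have hres : mn (ι k) % m = r := hφr (ψ k)
        have hq : m * (mn (ι k) / m) + r = mn (ι k) := by
          conv_rhs => rw [← Nat.div_add_mod (mn (ι k)) m]
          rw [hres]
        set q := mn (ι k) / m with hqdef
        have hqb : b + 1 ≤ q := by
          by_contra hqq
          push_neg at hqq
          have hqle : q ≤ b := by omega
          have hA : mn (ι k) ≤ m * b + r := by
            rw [← hq]
            exact Nat.add_le_add_right (Nat.mul_le_mul_left m hqle) r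
          have hC : m * b + r < r + (b + 2) * m := by
            have he : r + (b + 2) * m = m * b + r + 2 * m := by ring
            rw [he]
            exact Nat.lt_add_of_pos_right (by omega)
          exact absurd hmnk (not_le.mpr (lt_of_le_of_lt hA hC))
        obtain ⟨d, hd⟩ := Nat.exists_eq_add_of_le hqb
        have harith : (r + b * m) + (d + 1) * m = mn (ι k) := by
          rw [← hq, hd]; ring
        have := hstep (ι k) d (r + b * m) harith
        exact fun hG => this (subset_closure hG)
      have hmem : f^[r + b * m] zl ∈ R := hRit _ _ hzlR
      exact hRG _ hmem hGc
    have hzlR' : zl ∈ R' := by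
      rw [hR'char]
      intro s
      have hs : s ≤ r + s * m := by
        have h1 : s ≤ s * m := Nat.le_mul_of_pos_right s hm0
        exact h1.trans (Nat.le_add_left _ _)
      exact hV₀chain hs (hlim s)
    have hzlQ : zl ∈ Q := ⟨hzlR, (hR'char zl).mp hzlR' m⟩
    exact (Set.disjoint_left.mp hclGQ) hzlG hzlQ
  -- construct the repelling region
  obtain ⟨n₁, hn₁, hY⟩ := hIII
  refine ⟨⋃ k, f^[n₁ + k] ⁻¹' C, ⟨?_, n₁, hn₁, ?_⟩, ?_⟩
  · -- backward invariance
    intro y hy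
    simp only [mem_preimage, mem_iUnion] at hy ⊢
    obtain ⟨k, hk⟩ := hy
    refine ⟨k + 1, ?_⟩
    rw [show n₁ + (k + 1) = (n₁ + k) + 1 by omega, Function.iterate_succ_apply]
    exact hk
  · -- contraction into interior
    intro y hy
    simp only [mem_preimage] at hy
    have h1 : f^[n₁] y ∈ interior C := hY hy
    have hopen : IsOpen (f^[n₁] ⁻¹' interior C) := isOpen_interior.preimage (hf.iterate n₁)
    have hsubW : f^[n₁] ⁻¹' interior C ⊆ ⋃ k, f^[n₁ + k] ⁻¹' C := by
      intro w hw
      simp only [mem_iUnion, mem_preimage]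
      exact ⟨0, interior_subset hw⟩
    exact interior_maximal hsubW hopen h1
  · -- R' is the maximal forward invariant subset
    rw [maxInvPlus_eq_orbit]
    ext u
    simp only [mem_setOf_eq]
    constructor
    · intro hu n
      simp only [mem_iUnion, mem_preimage]
      refine ⟨0, ?_⟩
      rw [← Function.iterate_add_apply]
      apply hR'C
      rw [hR'char]
      intro j
      rw [← Function.iterate_add_apply]
      exact (hR'char u).mp hu _
    · intro hu
      have huW : ∀ n : ℕ, ∃ t, n ≤ t ∧ f^[t] u ∈ C := by
        intro n
        have := hu n
        simp only [mem_iUnion, mem_preimage] at this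
        obtain ⟨k, hk⟩ := this
        rw [← Function.iterate_add_apply] at hk
        exact ⟨n₁ + k + n, by omega, hk⟩
      have huR : u ∈ R := by
        rw [hRchar]
        intro j
        obtain ⟨t, hjt, htC⟩ := huW j
        exact hCN htC (by omega)
      rw [hR'char]
      intro s
      obtain ⟨t, hst, htC⟩ := huW s
      have htR : f^[t] u ∈ R := hRit t u huR
      have htV : f^[t] u ∈ V₀ := by
        rcases htC.2 with h | h
        · exact h
        · exact hRG _ htR h
      exact hV₀chain hst htV
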